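/- Let Ψ, Λ, Θ be GΦ-functions on ℝⁿ such that Ψ(x,·) and Λ(x,·) are strictly increasing for every x, and suppose Ψ^{-1}(x,t) Λ^{-1}(x,t) ≤ Θ^{-1}(x,t) for every x ∈ ℝⁿ and every t ≥ 0. Then there is an absolute constant C > 0 such that ‖f g‖_{Θ(·,L)} ≤ C ‖f‖_{Ψ(·,L)} ‖g‖_{Λ(·,L)} for all f ∈ L^{Ψ}(ℝⁿ) and g ∈ L^{Λ}(ℝⁿ). -/

import Mathlib

open MeasureTheory ENNReal NNReal Set

noncomputable section

abbrev Rn (n : ℕ) := EuclideanSpace ℝ (Fin n)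

namespace VarExp

variable {n : ℕ}

/-- Closed axis-parallel cube with center `c` and sidelength `l`. -/
def cubeSet (c : Rn n) (l : ℝ) : Set (Rn n) := {x | ∀ i, |x i - c i| ≤ l / 2}

/-- Characteristic function of a set. -/
def chi (s : Set (Rn n)) : Rn n → ℝ := s.indicator fun _ => 1

/-- Average of `b` over the cube with center `c` and sidelength `l`. -/
def cavg (c : Rn n) (l : ℝ) (b : Rn n → ℝ) : ℝ := ⨍ x in cubeSet c l, b x

/-- Global log-Hölder continuity with explicit constants. -/
def LogHolderWith (p : Rn n → ℝ) (C pinf : ℝ) : Prop :=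
  (∀ x y : Rn n, |p x - p y| ≤ C / Real.log (Real.exp 1 + 1 / ‖x - y‖)) ∧
  (∀ x : Rn n, |p x - pinf| ≤ C / Real.log (Real.exp 1 + ‖x‖))

/-- Global log-Hölder continuity (the class `P^log`). -/
def LogHolder (p : Rn n → ℝ) : Prop := ∃ C pinf : ℝ, 0 < C ∧ LogHolderWith p C pinf

/-- The class `P^loglog`: bounded and loglog-Hölder continuous. -/
def LogLogHolder (q : Rn n → ℝ) : Prop :=
  (∃ M : ℝ, ∀ x, |q x| ≤ M) ∧
  ∃ C : ℝ, 0 < C ∧ ∀ x y : Rn n,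
    |q x - q y| ≤ C / Real.log (Real.exp 1 + Real.log (Real.exp 1 + 1 / ‖x - y‖))

/-- Pointwise conjugate exponent. -/
def conj (t : ℝ) : ℝ := t / (t - 1)

/-- Luxemburg norm (with values in `ℝ≥0∞`) of an `ℝ≥0∞`-valued function for a
variable exponent `p`. -/
def vnormE (p : Rn n → ℝ) (f : Rn n → ℝ≥0∞) : ℝ≥0∞ :=
  sInf {lam : ℝ≥0∞ | ∃ l : ℝ, 0 < l ∧ lam = ENNReal.ofReal l ∧
    ∫⁻ x, (f x / ENNReal.ofReal l) ^ p x ≤ 1}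

/-- Variable exponent Lebesgue (Luxemburg) norm. -/
def vnorm (p : Rn n → ℝ) (f : Rn n → ℝ) : ℝ≥0∞ :=
  vnormE p fun x => ENNReal.ofReal |f x|

/-- `φ_p(x,t)` for an extended exponent : `t^p` if `p < ∞`, and `∞·χ_{(1,∞)}(t)` if `p = ∞`. -/
def phiExp (pe : ℝ≥0∞) (t : ℝ≥0∞) : ℝ≥0∞ :=
  if pe = ⊤ then (if t ≤ 1 then 0 else ⊤) else t ^ pe.toReal

/-- Luxemburg norm for an extended (possibly infinite) variable exponent. -/
def vnormX (p : Rn n → ℝ≥0∞) (f : Rn n → ℝ) : ℝ≥0∞ :=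
  sInf {lam : ℝ≥0∞ | ∃ l : ℝ, 0 < l ∧ lam = ENNReal.ofReal l ∧
    ∫⁻ x, phiExp (p x) (ENNReal.ofReal (|f x| / l)) ≤ 1}

/-- The Musielak–Orlicz norm of the space `L^{p(·)}(log L)^{q(·)}`. -/
def llognorm (p q : Rn n → ℝ) (f : Rn n → ℝ) : ℝ≥0∞ :=
  sInf {lam : ℝ≥0∞ | ∃ l : ℝ, 0 < l ∧ lam = ENNReal.ofReal l ∧
    ∫⁻ x, ENNReal.ofReal ((|f x| / l) ^ p x *
      Real.log (Real.exp 1 + |f x| / l) ^ q x) ≤ 1}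

/-- Generalized Φ-function. -/
def IsGPhi (Ψ : Rn n → ℝ → ℝ≥0∞) : Prop :=
  (∀ t : ℝ, Measurable fun x => Ψ x t) ∧
  (∀ x, ConvexOn ℝ≥0 (Ici (0:ℝ)) (Ψ x)) ∧
  (∀ x, Ψ x 0 = 0) ∧
  (∀ x, Filter.Tendsto (Ψ x) (nhdsWithin 0 (Ioi 0)) (nhds 0)) ∧
  (∀ x, Filter.Tendsto (Ψ x) Filter.atTop (nhds ⊤))

/-- Luxemburg norm associated to a generalized Φ-function. -/
def gnorm (Ψ : Rn n → ℝ → ℝ≥0∞) (f : Rn n → ℝ) : ℝ≥0∞ :=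
  sInf {lam : ℝ≥0∞ | ∃ l : ℝ, 0 < l ∧ lam = ENNReal.ofReal l ∧
    ∫⁻ x, Ψ x (|f x| / l) ≤ 1}

/-- Generalized inverse of a generalized Φ-function. -/
def ginv (Ψ : Rn n → ℝ → ℝ≥0∞) (x : Rn n) (t : ℝ≥0∞) : ℝ :=
  sInf {u : ℝ | 0 ≤ u ∧ t ≤ Ψ x u}

/-- Conjugate (Legendre transform) of a generalized Φ-function. -/
def gconj (Ψ : Rn n → ℝ → ℝ≥0∞) (x : Rn n) (u : ℝ) : ℝ≥0∞ :=
  ⨆ t : Ici (0:ℝ), ENNReal.ofReal (t.1 * u) - Ψ x t.1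

/-- Condition 𝓕 on a triple of generalized Φ-functions. -/
def CondF (A B D : Rn n → ℝ → ℝ≥0∞) : Prop :=
  ∃ C : ℝ, 0 < C ∧
    (∀ (c : Rn n) (l : ℝ), 0 < l →
      gnorm A (chi (cubeSet c l)) * gnorm B (chi (cubeSet c l)) ≤
        ENNReal.ofReal C * gnorm D (chi (cubeSet c l))) ∧
    (∀ (x : Rn n) (t : ℝ≥0∞), ginv A x t * ginv B x t ≤ C * ginv D x t) ∧
    (∀ (c : Rn n) (l : ℝ), 0 < l →
      gnorm D (chi (cubeSet c l)) * gnorm (gconj D) (chi (cubeSet c l)) ≤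
        ENNReal.ofReal (C * l ^ n))

/-- Maximal operator associated to a generalized Φ-function. -/
def gmax (Ψ : Rn n → ℝ → ℝ≥0∞) (f : Rn n → ℝ) (x : Rn n) : ℝ≥0∞ :=
  ⨆ (c : Rn n) (l : ℝ) (_ : 0 < l) (_ : x ∈ cubeSet c l),
    gnorm Ψ ((cubeSet c l).indicator f) / gnorm Ψ (chi (cubeSet c l))

/-- Fractional maximal operator associated to a generalized Φ-function, where the
fractional exponent `β` is allowed to take the value `∞`. -/
def gmaxFrac (β : Rn n → ℝ≥0∞) (Ψ : Rn n → ℝ → ℝ≥0∞) (f : Rn n → ℝ) (x : Rn n) : ℝ≥0∞ :=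
  ⨆ (c : Rn n) (l : ℝ) (_ : 0 < l) (_ : x ∈ cubeSet c l),
    vnormX β (chi (cubeSet c l)) *
      gnorm Ψ ((cubeSet c l).indicator f) / gnorm Ψ (chi (cubeSet c l))

/-- `φ_{a,b}(t) = t^a (log(e+t))^b`. -/
def phiab (a b t : ℝ) : ℝ := t ^ a * Real.log (Real.exp 1 + t) ^ b

/-- Generalized inverse of `φ_{a,b}`. -/
def phiInv (a b s : ℝ) : ℝ := sInf {u : ℝ | 0 ≤ u ∧ s ≤ phiab a b u}

/-- The annulus `{x : r < ‖x‖ ≤ R}`. -/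
def annulus (r R : ℝ) : Set (Rn n) := {x | r < ‖x‖ ∧ ‖x‖ ≤ R}

/-- `K̄(t) = ess sup_{t<|x|≤2t} K(x)`. -/
def Kbar (K : Rn n → ℝ) (t : ℝ) : ℝ≥0∞ :=
  essSup (fun x => ENNReal.ofReal (K x)) (volume.restrict (annulus t (2 * t)))

/-- `K̃(t) = ∫_{|z|≤t} K(z) dz`. -/
def Ktilde (K : Rn n → ℝ) (t : ℝ) : ℝ :=
  ∫ z in {z : Rn n | ‖z‖ ≤ t}, K z

/-- The class 𝔇 of kernels, with explicit parameters `c`, `δ`, `ε`. -/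
def ClassDWith (K : Rn n → ℝ) (c δ ε : ℝ) : Prop :=
  LocallyIntegrable K ∧ (∀ x, 0 ≤ K x) ∧
  0 < c ∧ 0 < δ ∧ 0 ≤ ε ∧ ε < 1 ∧
  ∀ k : ℤ,
    essSup (fun x => ENNReal.ofReal (K x))
        (volume.restrict (annulus ((2:ℝ) ^ k) ((2:ℝ) ^ (k+1)))) ≤
      ENNReal.ofReal ((c / (2:ℝ) ^ (k * (n:ℤ))) *
        ∫ y in annulus (δ * (1-ε) * (2:ℝ) ^ k) (2 * δ * (1+ε) * (2:ℝ) ^ k), K y)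

/-- The class 𝔇 of kernels. -/
def ClassD (K : Rn n → ℝ) : Prop := ∃ c δ ε : ℝ, ClassDWith K c δ ε

/-- The half-open dyadic cube `2^{-k}([0,1)^n + m)`. -/
def dyadicSet (k : ℤ) (m : Fin n → ℤ) : Set (Rn n) :=
  {x | ∀ i, (m i : ℝ) * (2:ℝ) ^ (-k) ≤ x i ∧ x i < ((m i : ℝ) + 1) * (2:ℝ) ^ (-k)}

/-- The center of the dyadic cube `2^{-k}([0,1)^n + m)`. -/
def dyadicCenter (k : ℤ) (m : Fin n → ℤ) : Rn n :=
  (WithLp.equiv 2 (Fin n → ℝ)).symm fun i => ((m i : ℝ) + 1 / 2) * (2:ℝ) ^ (-k)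

end VarExp

section AuxHolder

open VarExp

variable {n : ℕ}

/-- Scaling inequality from convexity: `Ψ x (c * s) ≤ c * Ψ x s` for `c ≤ 1`. -/
lemma gphi_scale {Ψ : Rn n → ℝ → ℝ≥0∞} (h : IsGPhi Ψ) (x : Rn n) {s : ℝ}
    (hs : 0 ≤ s) (c : ℝ≥0) (hc : c ≤ 1) :
    Ψ x ((c : ℝ) * s) ≤ (c : ℝ≥0∞) * Ψ x s := by
  have hconv := (h.2.1 x).2 (mem_Ici.mpr hs) (mem_Ici.mpr le_rfl)
      (zero_le : 0 ≤ c) (zero_le : 0 ≤ 1 - c) (add_tsub_cancel_of_le hc)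
  simpa [NNReal.smul_def, ENNReal.smul_def, smul_eq_mul, h.2.2.1 x] using hconv

/-- Scaling inequality, real-coefficient version. -/
lemma gphi_scale' {Ψ : Rn n → ℝ → ℝ≥0∞} (h : IsGPhi Ψ) (x : Rn n) {s c : ℝ}
    (hs : 0 ≤ s) (hc0 : 0 ≤ c) (hc1 : c ≤ 1) :
    Ψ x (c * s) ≤ ENNReal.ofReal c * Ψ x s := by
  have hc' : c.toNNReal ≤ 1 := Real.toNNReal_le_one.mpr hc1
  have h1 := gphi_scale h x hs c.toNNReal hc'
  rw [Real.coe_toNNReal c hc0] at h1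
  exact h1

/-- A generalized Φ-function is monotone on `[0, ∞)`. -/
lemma gphi_mono {Ψ : Rn n → ℝ → ℝ≥0∞} (h : IsGPhi Ψ) (x : Rn n) {s w : ℝ}
    (hs : 0 ≤ s) (hsw : s ≤ w) : Ψ x s ≤ Ψ x w := by
  rcases eq_or_lt_of_le (hs.trans hsw) with hw | hw
  · have hw0 : w = 0 := hw.symm
    subst hw0
    have hs0 : s = 0 := le_antisymm hsw hs
    rw [hs0]
  · have h1 := gphi_scale' h x hw.le (div_nonneg hs hw.le) ((div_le_one hw).mpr hsw)
    have e : s / w * w = s := by field_simp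
    rw [e] at h1
    refine h1.trans ?_
    calc ENNReal.ofReal (s / w) * Ψ x w ≤ 1 * Ψ x w :=
          mul_le_mul_left (ENNReal.ofReal_le_one.mpr ((div_le_one hw).mpr hsw)) _
      _ = Ψ x w := one_mul _

/-- Halving inequality. -/
lemma gphi_half {Ψ : Rn n → ℝ → ℝ≥0∞} (h : IsGPhi Ψ) (x : Rn n) {s : ℝ} (hs : 0 ≤ s) :
    Ψ x (s / 2) ≤ (1 / 2 : ℝ≥0∞) * Ψ x s := by
  have h1 := gphi_scale' h x hs (by norm_num : (0:ℝ) ≤ 1/2) (by norm_num)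
  have e1 : (1/2 : ℝ) * s = s / 2 := by ring
  have e2 : ENNReal.ofReal (1/2 : ℝ) = 1 / 2 := by
    rw [ENNReal.ofReal_div_of_pos (by norm_num)]
    norm_num
  rw [e1, e2] at h1
  exact h1

/-- Pointwise core inequality: `Θ x (u v / 2) ≤ Ψ x u + Λ x v`. -/
lemma gphi_core {Ψ Λ Θ : Rn n → ℝ → ℝ≥0∞} (hΨ : IsGPhi Ψ) (hΛ : IsGPhi Λ) (hΘ : IsGPhi Θ)
    (hmΨ : ∀ x, StrictMonoOn (Ψ x) (Set.Ici (0 : ℝ)))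
    (hmΛ : ∀ x, StrictMonoOn (Λ x) (Set.Ici (0 : ℝ)))
    (hinv : ∀ (x : Rn n) (t : ℝ≥0∞), ginv Ψ x t * ginv Λ x t ≤ ginv Θ x t)
    (x : Rn n) {u v : ℝ} (hu : 0 ≤ u) (hv : 0 ≤ v) :
    Θ x (u * v / 2) ≤ Ψ x u + Λ x v := by
  rcases eq_or_lt_of_le hu with hu0 | hu0
  · simp [← hu0, hΘ.2.2.1 x]
  rcases eq_or_lt_of_le hv with hv0 | hv0
  · simp [← hv0, hΘ.2.2.1 x]
  by_cases htop : Ψ x u = ⊤ ∨ Λ x v = ⊤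
  · rcases htop with h | h <;> simp [h]
  push_neg at htop
  set t : ℝ≥0∞ := max (Ψ x u) (Λ x v) with ht
  have htlt : t < ⊤ := max_lt (lt_top_iff_ne_top.mpr htop.1) (lt_top_iff_ne_top.mpr htop.2)
  have hne : ∀ (Φ : Rn n → ℝ → ℝ≥0∞), IsGPhi Φ → {w : ℝ | 0 ≤ w ∧ t ≤ Φ x w}.Nonempty := by
    intro Φ hΦ
    have h1 : ∀ᶠ w in Filter.atTop, Φ x w ∈ Ioi t :=
      (hΦ.2.2.2.2 x).eventually_mem (Ioi_mem_nhds htlt)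
    obtain ⟨w, hw1, hw2⟩ := (h1.and (Filter.eventually_ge_atTop (0:ℝ))).exists
    exact ⟨w, hw2, hw1.le⟩
  have hu' : u ≤ ginv Ψ x t := by
    refine le_csInf (hne Ψ hΨ) ?_
    rintro w ⟨hw0, hwt⟩
    by_contra hlt
    push_neg at hlt
    exact absurd (le_trans (le_max_left _ _) hwt) (not_le.mpr (hmΨ x hw0 hu hlt))
  have hv' : v ≤ ginv Λ x t := by
    refine le_csInf (hne Λ hΛ) ?_
    rintro w ⟨hw0, hwt⟩
    by_contra hlt
    push_neg at hlt
    exact absurd (le_trans (le_max_right _ _) hwt) (not_le.mpr (hmΛ x hw0 hv hlt))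
  have huv : u * v ≤ ginv Θ x t :=
    le_trans (mul_le_mul hu' hv' hv (hu.trans hu')) (hinv x t)
  have hlt2 : u * v / 2 < ginv Θ x t := lt_of_lt_of_le (by nlinarith) huv
  have hnot : ¬ t ≤ Θ x (u * v / 2) := by
    intro hmem
    have hle : ginv Θ x t ≤ u * v / 2 :=
      csInf_le ⟨0, fun w hw => hw.1⟩ ⟨by positivity, hmem⟩
    exact absurd hle (not_le.mpr hlt2)
  calc Θ x (u * v / 2) ≤ t := (not_le.mp hnot).le
    _ ≤ Ψ x u + Λ x v := max_le le_self_add le_add_self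

end AuxHolder

open VarExp in
/-- generalized Hölder inequality for Musielak–Orlicz norms:
if `Ψ^{-1}(x,t) Λ^{-1}(x,t) ≤ Θ^{-1}(x,t)` then `‖fg‖_Θ ≲ ‖f‖_Ψ ‖g‖_Λ`. -/
theorem statement12 :
    ∃ C : ℝ, 0 < C ∧ ∀ (n : ℕ) (Ψ Λ Θ : Rn n → ℝ → ℝ≥0∞),
      IsGPhi Ψ → IsGPhi Λ → IsGPhi Θ →
      (∀ x, StrictMonoOn (Ψ x) (Set.Ici (0 : ℝ))) →
      (∀ x, StrictMonoOn (Λ x) (Set.Ici (0 : ℝ))) →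
      (∀ (x : Rn n) (t : ℝ≥0∞), ginv Ψ x t * ginv Λ x t ≤ ginv Θ x t) →
      ∀ f g : Rn n → ℝ, Measurable f → Measurable g →
        gnorm Ψ f ≠ ⊤ → gnorm Λ g ≠ ⊤ →
        gnorm Θ (fun x => f x * g x) ≤ ENNReal.ofReal C * (gnorm Ψ f * gnorm Λ g) := by
  refine ⟨8, by norm_num, ?_⟩
  intro n Ψ Λ Θ hΨ hΛ hΘ hmΨ hmΛ hinv f g hf hg hfin hgin
  -- the Luxemburg defining sets
  set SΨ : Set ℝ≥0∞ := {lam : ℝ≥0∞ | ∃ l : ℝ, 0 < l ∧ lam = ENNReal.ofReal l ∧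
    ∫⁻ x, Ψ x (|f x| / l) ≤ 1} with hSΨ
  set SΛ : Set ℝ≥0∞ := {lam : ℝ≥0∞ | ∃ l : ℝ, 0 < l ∧ lam = ENNReal.ofReal l ∧
    ∫⁻ x, Λ x (|g x| / l) ≤ 1} with hSΛ
  have hgΨ : gnorm Ψ f = sInf SΨ := rfl
  have hgΛ : gnorm Λ g = sInf SΛ := rfl
  set X : ℝ≥0∞ := gnorm Θ (fun x => f x * g x) with hXdef
  -- key step: if `a, b` are admissible then `8ab` is admissible for the product
  have key : ∀ a b : ℝ, 0 < a → 0 < b → (∫⁻ x, Ψ x (|f x| / a)) ≤ 1 →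
      (∫⁻ x, Λ x (|g x| / b)) ≤ 1 → X ≤ ENNReal.ofReal (8 * (a * b)) := by
    intro a b ha hb hfa hgb
    set F : Rn n → ℝ≥0∞ := fun x => ⨆ q : ℚ,
      if 0 ≤ (q : ℝ) ∧ (q : ℝ) < |f x| / a then Ψ x q else 0 with hFdef
    set G : Rn n → ℝ≥0∞ := fun x => ⨆ q : ℚ,
      if 0 ≤ (q : ℝ) ∧ (q : ℝ) < |g x| / b then Λ x q else 0 with hGdef
    have hFmeas : Measurable F := by
      apply Measurable.iSup
      intro q
      refine Measurable.ite ?_ (hΨ.1 q) measurable_const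
      by_cases hq : 0 ≤ (q : ℝ)
      · simp only [hq, true_and]
        exact measurableSet_lt measurable_const (hf.abs.div_const a)
      · simp only [hq, false_and]
        exact MeasurableSet.empty
    have hGmeas : Measurable G := by
      apply Measurable.iSup
      intro q
      refine Measurable.ite ?_ (hΛ.1 q) measurable_const
      by_cases hq : 0 ≤ (q : ℝ)
      · simp only [hq, true_and]
        exact measurableSet_lt measurable_const (hg.abs.div_const b)
      · simp only [hq, false_and]
        exact MeasurableSet.empty
    have hFle : ∀ x, F x ≤ Ψ x (|f x| / a) := by
      intro x
      refine iSup_le fun q => ?_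
      split_ifs with h
      · exact (hmΨ x h.1 (Set.mem_Ici.mpr (by positivity)) h.2).le
      · exact zero_le
    have hGle : ∀ x, G x ≤ Λ x (|g x| / b) := by
      intro x
      refine iSup_le fun q => ?_
      split_ifs with h
      · exact (hmΛ x h.1 (Set.mem_Ici.mpr (by positivity)) h.2).le
      · exact zero_le
    have hFint : ∫⁻ x, F x ≤ 1 := le_trans (lintegral_mono hFle) hfa
    have hGint : ∫⁻ x, G x ≤ 1 := le_trans (lintegral_mono hGle) hgb
    have hpt : ∀ x, Θ x (|f x * g x| / (8 * (a * b))) ≤ (1/2 : ℝ≥0∞) * (F x + G x) := by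
      intro x
      have hu : (0:ℝ) ≤ |f x| / a := by positivity
      have hv : (0:ℝ) ≤ |g x| / b := by positivity
      set u : ℝ := |f x| / a with hudef
      set v : ℝ := |g x| / b with hvdef
      have harg : |f x * g x| / (8 * (a * b)) = u * v / 8 := by
        rw [hudef, hvdef, abs_mul, div_mul_div_comm, div_div]
        congr 1
        ring
      rw [harg]
      rcases eq_or_lt_of_le hu with hu0 | hu0
      · simp [← hu0, hΘ.2.2.1 x]
      rcases eq_or_lt_of_le hv with hv0 | hv0
      · simp [← hv0, hΘ.2.2.1 x]
      obtain ⟨qu, hqu1, hqu2⟩ := exists_rat_btwn (show (3/4) * u < u by nlinarith)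
      obtain ⟨qv, hqv1, hqv2⟩ := exists_rat_btwn (show (3/4) * v < v by nlinarith)
      have hqu0 : (0:ℝ) ≤ (qu:ℝ) := by nlinarith
      have hqv0 : (0:ℝ) ≤ (qv:ℝ) := by nlinarith
      have step1 : Θ x (u * v / 8) ≤ (1/2 : ℝ≥0∞) * Θ x (u * v / 4) := by
        have h1 := gphi_half hΘ x (show (0:ℝ) ≤ u * v / 4 by positivity)
        have e : u * v / 4 / 2 = u * v / 8 := by ring
        rw [e] at h1
        exact h1
      have step2 : Θ x (u * v / 4) ≤ Θ x ((qu:ℝ) * qv / 2) :=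
        gphi_mono hΘ x (by positivity) (by nlinarith)
      have step3 : Θ x ((qu:ℝ) * qv / 2) ≤ Ψ x qu + Λ x qv :=
        gphi_core hΨ hΛ hΘ hmΨ hmΛ hinv x hqu0 hqv0
      have hFq : Ψ x qu ≤ F x := by
        have e : (if 0 ≤ (qu:ℝ) ∧ (qu:ℝ) < u then Ψ x (qu:ℝ) else 0) = Ψ x (qu:ℝ) :=
          if_pos ⟨hqu0, hqu2⟩
        calc Ψ x (qu:ℝ) = _ := e.symm
          _ ≤ F x := le_iSup (fun q : ℚ =>
              if 0 ≤ (q:ℝ) ∧ (q:ℝ) < u then Ψ x (q:ℝ) else 0) qu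
      have hGq : Λ x qv ≤ G x := by
        have e : (if 0 ≤ (qv:ℝ) ∧ (qv:ℝ) < v then Λ x (qv:ℝ) else 0) = Λ x (qv:ℝ) :=
          if_pos ⟨hqv0, hqv2⟩
        calc Λ x (qv:ℝ) = _ := e.symm
          _ ≤ G x := le_iSup (fun q : ℚ =>
              if 0 ≤ (q:ℝ) ∧ (q:ℝ) < v then Λ x (q:ℝ) else 0) qv
      calc Θ x (u * v / 8) ≤ (1/2 : ℝ≥0∞) * Θ x (u * v / 4) := step1
        _ ≤ (1/2 : ℝ≥0∞) * (Ψ x qu + Λ x qv) :=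
            mul_le_mul_right (step2.trans step3) _
        _ ≤ (1/2 : ℝ≥0∞) * (F x + G x) := mul_le_mul_right (add_le_add hFq hGq) _
    have hint : ∫⁻ x, Θ x (|f x * g x| / (8 * (a * b))) ≤ 1 := by
      calc ∫⁻ x, Θ x (|f x * g x| / (8 * (a * b)))
          ≤ ∫⁻ x, (1/2 : ℝ≥0∞) * (F x + G x) := lintegral_mono hpt
        _ = (1/2 : ℝ≥0∞) * ∫⁻ x, (F x + G x) :=
            lintegral_const_mul' _ _ (by norm_num)
        _ = (1/2 : ℝ≥0∞) * ((∫⁻ x, F x) + ∫⁻ x, G x) := by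
            rw [lintegral_add_left hFmeas]
        _ ≤ (1/2 : ℝ≥0∞) * (1 + 1) :=
            mul_le_mul_right (add_le_add hFint hGint) _
        _ = 1 := by
            rw [one_add_one_eq_two, one_div, ENNReal.inv_mul_cancel (by norm_num) (by norm_num)]
    exact sInf_le ⟨8 * (a * b), by positivity, rfl, hint⟩
  -- membership form of the key step
  have key' : ∀ A ∈ SΨ, ∀ B ∈ SΛ, X ≤ 8 * (A * B) := by
    rintro A ⟨a, ha, rfl, haint⟩ B ⟨b, hb, rfl, hbint⟩
    have h1 := key a b ha hb haint hbint
    rw [ENNReal.ofReal_mul (by norm_num : (0:ℝ) ≤ 8), ENNReal.ofReal_mul ha.le] at h1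
    simpa using h1
  -- nonemptiness of the defining sets
  have hSΨne : SΨ.Nonempty := by
    by_contra h
    rw [Set.not_nonempty_iff_eq_empty] at h
    exact hfin (by rw [hgΨ, h, _root_.sInf_empty])
  have hSΛne : SΛ.Nonempty := by
    by_contra h
    rw [Set.not_nonempty_iff_eq_empty] at h
    exact hgin (by rw [hgΛ, h, _root_.sInf_empty])
  have hfin' : sInf SΨ ≠ ⊤ := by rw [← hgΨ]; exact hfin
  -- step 1: fix B ∈ SΛ
  have step1 : ∀ B ∈ SΛ, X ≤ 8 * sInf SΨ * B := by
    intro B hB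
    obtain ⟨b, hb, hBeq, hbint⟩ := hB
    have hB0 : (8 : ℝ≥0∞) * B ≠ 0 := by
      rw [hBeq]
      exact mul_ne_zero (by norm_num) (ENNReal.ofReal_pos.mpr hb).ne'
    have hBt : (8 : ℝ≥0∞) * B ≠ ⊤ := by
      rw [hBeq]
      exact ENNReal.mul_ne_top (by norm_num) ENNReal.ofReal_ne_top
    have h1 : X / (8 * B) ≤ sInf SΨ := by
      refine le_sInf fun A hA => ?_
      rw [ENNReal.div_le_iff_le_mul (Or.inl hB0) (Or.inl hBt)]
      calc X ≤ 8 * (A * B) := key' A hA B ⟨b, hb, hBeq, hbint⟩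
        _ = A * (8 * B) := by ring
    rw [ENNReal.div_le_iff_le_mul (Or.inl hB0) (Or.inl hBt)] at h1
    calc X ≤ sInf SΨ * (8 * B) := h1
      _ = 8 * sInf SΨ * B := by ring
  -- step 2: pass to the infimum over B
  have final : X ≤ 8 * (sInf SΨ * sInf SΛ) := by
    by_cases h0 : sInf SΨ = 0
    · obtain ⟨B, hB⟩ := hSΛne
      have h1 := step1 B hB
      rw [h0] at h1
      obtain ⟨b, hb, hBeq, -⟩ := hB
      have hBt : B ≠ ⊤ := by rw [hBeq]; exact ENNReal.ofReal_ne_top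
      have h2 : X = 0 := by
        have : (8 : ℝ≥0∞) * 0 * B = 0 := by rw [mul_zero, zero_mul]
        rw [this] at h1
        exact le_antisymm h1 (zero_le)
      rw [h2]
      exact zero_le
    · have hc0 : (8 : ℝ≥0∞) * sInf SΨ ≠ 0 := mul_ne_zero (by norm_num) h0
      have hct : (8 : ℝ≥0∞) * sInf SΨ ≠ ⊤ := ENNReal.mul_ne_top (by norm_num) hfin'
      have h2 : X / (8 * sInf SΨ) ≤ sInf SΛ := by
        refine le_sInf fun B hB => ?_
        rw [ENNReal.div_le_iff_le_mul (Or.inl hc0) (Or.inl hct)]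
        calc X ≤ 8 * sInf SΨ * B := step1 B hB
          _ = B * (8 * sInf SΨ) := by ring
      rw [ENNReal.div_le_iff_le_mul (Or.inl hc0) (Or.inl hct)] at h2
      calc X ≤ sInf SΛ * (8 * sInf SΨ) := h2
        _ = 8 * (sInf SΨ * sInf SΛ) := by ring
  rw [hgΨ, hgΛ]
  have h8 : ENNReal.ofReal (8 : ℝ) = 8 := by
    norm_num
  rw [h8]
  exact final
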